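/- Let χ = (χ₀,…,χₙ) be a weight vector, let I ⊊ {0,…,n} be a proper subset with complement J, and set q = gcd{χᵢ : i ∈ J}. Let U_I = {[z₀:…:zₙ] ∈ ℙ(χ) : zᵢ ≠ 0 for all i ∉ I}. Then U_I is homeomorphic to (ℂ^×)^{|J|−1} × (ℂ^I / μ_q⟨χ_I⟩), where μ_q is the group of q-th roots of unity acting on ℂ^I by ζ·(zᵢ)_{i∈I} = (ζ^{χᵢ}zᵢ)_{i∈I}. -/

import Mathlib

noncomputable section

/-- The unit sphere `S^{2n+1} ⊂ ℂ^{n+1}`. -/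
def USphere (n : ℕ) : Type := {z : Fin (n + 1) → ℂ // ∑ i, Complex.normSq (z i) = 1}

instance (n : ℕ) : TopologicalSpace (USphere n) :=
  instTopologicalSpaceSubtype

/-- The weighted `S¹`-action equivalence relation on the unit sphere. -/
def wpSetoid (n : ℕ) (χ : Fin (n + 1) → ℕ) : Setoid (USphere n) where
  r z w := ∃ g : ℂ, ‖g‖ = 1 ∧ ∀ i, g ^ χ i * z.1 i = w.1 i
  iseqv := by
    constructor
    · exact fun z => ⟨1, by simp⟩
    · rintro z w ⟨g, hg, h⟩
      have hg0 : g ≠ 0 := by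
        intro h0; rw [h0] at hg; simp at hg
      refine ⟨g⁻¹, by simp [hg], fun i => ?_⟩
      rw [← h i, ← mul_assoc, ← mul_pow, inv_mul_cancel₀ hg0, one_pow, one_mul]
    · rintro x y z ⟨g, hg, h⟩ ⟨g', hg', h'⟩
      refine ⟨g' * g, by simp [hg, hg'], fun i => ?_⟩
      rw [← h' i, ← h i, ← mul_assoc, mul_pow]

/-- The weighted projective space `ℙ(χ)` as the quotient of the unit sphere by the
weighted circle action, with the quotient topology. -/
def WProj (n : ℕ) (χ : Fin (n + 1) → ℕ) : Type := Quotient (wpSetoid n χ)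

instance (n : ℕ) (χ : Fin (n + 1) → ℕ) : TopologicalSpace (WProj n χ) :=
  instTopologicalSpaceQuotient

/-- The second-smallest element of a multiset of naturals (for a singleton multiset we
take its unique element, corresponding to normalizing a single weight to `1`). -/
def secondMin (s : Multiset ℕ) : ℕ :=
  (s.sort (· ≤ ·)).getD 1 ((s.sort (· ≤ ·)).getD 0 0)

/-- `b_p(χ)`: the second-smallest `p`-adic valuation among the weights. -/
def bval (p : ℕ) {n : ℕ} (χ : Fin (n + 1) → ℕ) : ℕ :=
  secondMin (Finset.univ.val.map fun i => (χ i).factorization p)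

/-- The normalization `N(χ)` of a weight vector, characterized by
`v_p(N(χ)_i) = max (v_p(χ_i) - b_p(χ)) 0` for all primes `p`. -/
def normalizeWt {n : ℕ} (χ : Fin (n + 1) → ℕ) : Fin (n + 1) → ℕ :=
  fun i => ∏ p ∈ (χ i).primeFactors, p ^ ((χ i).factorization p - bval p χ)

end

noncomputable section

/-- `ℂ^{n+1} ∖ {0}`. -/
def CPts (n : ℕ) : Type := {z : Fin (n + 1) → ℂ // z ≠ 0}

instance (n : ℕ) : TopologicalSpace (CPts n) := instTopologicalSpaceSubtype

/-- The weighted `ℂ^×`-action equivalence relation on `ℂ^{n+1} ∖ {0}`: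
`z ∼ w` iff `w = g·z = (g^{χ₀}z₀, …, g^{χₙ}zₙ)` for some `g ∈ ℂ^×`. -/
def cpSetoid (n : ℕ) (χ : Fin (n + 1) → ℕ) : Setoid (CPts n) where
  r z w := ∃ g : ℂ, g ≠ 0 ∧ ∀ i, g ^ χ i * z.1 i = w.1 i
  iseqv := by
    constructor
    · exact fun z => ⟨1, one_ne_zero, by simp⟩
    · rintro z w ⟨g, hg, h⟩
      refine ⟨g⁻¹, inv_ne_zero hg, fun i => ?_⟩
      rw [← h i, ← mul_assoc, ← mul_pow, inv_mul_cancel₀ hg, one_pow, one_mul]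
    · rintro x y z ⟨g, hg, h⟩ ⟨g', hg', h'⟩
      refine ⟨g' * g, mul_ne_zero hg' hg, fun i => ?_⟩
      rw [← h' i, ← h i, ← mul_assoc, mul_pow]

/-- Weighted projective space realized as the quotient of `ℂ^{n+1} ∖ {0}` by the weighted
`ℂ^×`-action, with the quotient topology. -/
def CProj (n : ℕ) (χ : Fin (n + 1) → ℕ) : Type := Quotient (cpSetoid n χ)

instance (n : ℕ) (χ : Fin (n + 1) → ℕ) : TopologicalSpace (CProj n χ) :=
  instTopologicalSpaceQuotient

end

/-- The action of the `q`-th roots of unity on `ℂ^I` with weights `χ_I`, as an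
equivalence relation: `z ∼ w` iff `w = ζ·z = (ζ^{χᵢ}zᵢ)_{i∈I}` for some `ζ` with `ζ^q = 1`. -/
def muSetoid (q : ℕ) {n : ℕ} (χ : Fin (n + 1) → ℕ) (I : Finset (Fin (n + 1))) :
    Setoid (↥I → ℂ) where
  r z w := ∃ ζ : ℂ, ζ ≠ 0 ∧ ζ ^ q = 1 ∧ ∀ i : ↥I, ζ ^ χ i.1 * z i = w i
  iseqv := by
    constructor
    · exact fun z => ⟨1, one_ne_zero, one_pow q, by simp⟩
    · rintro z w ⟨ζ, hζ, hζq, h⟩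
      refine ⟨ζ⁻¹, inv_ne_zero hζ, by rw [inv_pow, hζq, inv_one], fun i => ?_⟩
      rw [← h i, ← mul_assoc, ← mul_pow, inv_mul_cancel₀ hζ, one_pow, one_mul]
    · rintro x y z ⟨ζ, hζ, hζq, h⟩ ⟨ζ', hζ', hζq', h'⟩
      refine ⟨ζ' * ζ, mul_ne_zero hζ' hζ, by rw [mul_pow, hζq, hζq', one_mul], fun i => ?_⟩
      rw [← h' i, ← h i, ← mul_assoc, mul_pow]


open Complex Topology

noncomputable section AuxWP

/-- `ℂˣ` is homeomorphic to the subtype of nonzero complex numbers. -/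
def unitsHomeoNZ : ℂˣ ≃ₜ {g : ℂ // g ≠ 0} where
  toFun u := ⟨(u : ℂ), u.ne_zero⟩
  invFun g := Units.mk0 g.1 g.2
  left_inv u := Units.ext rfl
  right_inv g := rfl
  continuous_toFun := Units.continuous_val.subtype_mk _
  continuous_invFun := by
    rw [Units.continuous_iff]
    exact ⟨continuous_subtype_val, continuous_subtype_val.inv₀ (fun g => g.2)⟩

def finConsHomeo (m : ℕ) (Y : Type*) [TopologicalSpace Y] :
    (Fin (m + 1) → Y) ≃ₜ Y × (Fin m → Y) where
  toFun u := (u 0, u ∘ Fin.succ)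
  invFun p := Fin.cons p.1 p.2
  left_inv u := funext fun k => Fin.cases rfl (fun j => rfl) k
  right_inv p := by ext <;> simp
  continuous_toFun := (continuous_apply 0).prodMk (by continuity)
  continuous_invFun := continuous_pi fun k => by
    refine Fin.cases ?_ (fun j => ?_) k
    · simpa using continuous_fst
    · simp only [Fin.cons_succ]; exact (continuous_apply j).comp continuous_snd

def finSnocHomeo (m : ℕ) (Y : Type*) [TopologicalSpace Y] :
    (Fin (m + 1) → Y) ≃ₜ (Fin m → Y) × Y where
  toFun u := (u ∘ Fin.castSucc, u (Fin.last m))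
  invFun p := Fin.snoc p.1 p.2
  left_inv u := funext fun k => by
    refine Fin.lastCases ?_ (fun j => ?_) k <;> simp
  right_inv p := by ext <;> simp
  continuous_toFun := (by continuity : Continuous fun u : Fin (m+1) → Y => u ∘ Fin.castSucc).prodMk
    (continuous_apply _)
  continuous_invFun := continuous_pi fun k => by
    refine Fin.lastCases ?_ (fun j => ?_) k
    · simpa using continuous_snd
    · simp only [Fin.snoc_castSucc]; exact (continuous_apply j).comp continuous_fst

private lemma zpow_comb (x y : ℂˣ) (a b e f : ℤ) :
    (x ^ a * y ^ b) ^ e * (x ^ (0:ℤ) * y ^ (0:ℤ)) ^ f = x ^ (a*e) * y ^ (b*e) := by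
  simp [mul_zpow, ← zpow_mul]

private lemma zpow_comb4 (x y : ℂˣ) (a b c d e f : ℤ) :
    (x ^ a * y ^ b) ^ e * (x ^ c * y ^ d) ^ f = x ^ (a*e + c*f) * y ^ (b*e + d*f) := by
  rw [mul_zpow, mul_zpow, mul_mul_mul_comm, ← zpow_mul, ← zpow_mul, ← zpow_mul, ← zpow_mul,
    ← zpow_add, ← zpow_add]

def monomialHomeo (α β γ δ : ℤ) (hdet : α * δ - β * γ = 1) :
    (ℂˣ × ℂˣ) ≃ₜ ℂˣ × ℂˣ where
  toFun p := (p.1 ^ α * p.2 ^ β, p.1 ^ γ * p.2 ^ δ)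
  invFun p := (p.1 ^ δ * p.2 ^ (-β), p.1 ^ (-γ) * p.2 ^ α)
  left_inv p := by
    obtain ⟨x, y⟩ := p
    have e1 : α * δ + γ * (-β) = 1 := by linear_combination hdet
    have e2 : β * δ + δ * (-β) = 0 := by ring
    have e3 : α * (-γ) + γ * α = 0 := by ring
    have e4 : β * (-γ) + δ * α = 1 := by linear_combination hdet
    simp only [zpow_comb4, e1, e2, e3, e4, zpow_one, zpow_zero, mul_one, one_mul]
  right_inv p := by
    obtain ⟨x, y⟩ := p
    have e1 : δ * α + (-γ) * β = 1 := by linear_combination hdet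
    have e2 : (-β) * α + α * β = 0 := by ring
    have e3 : δ * γ + (-γ) * δ = 0 := by ring
    have e4 : (-β) * γ + α * δ = 1 := by linear_combination hdet
    simp only [zpow_comb4, e1, e2, e3, e4, zpow_one, zpow_zero, mul_one, one_mul]
  continuous_toFun := by
    refine Continuous.prodMk ?_ ?_ <;>
      exact Continuous.mul ((continuous_zpow _).comp continuous_fst)
        ((continuous_zpow _).comp continuous_snd)
  continuous_invFun := by
    refine Continuous.prodMk ?_ ?_ <;>
      exact Continuous.mul ((continuous_zpow _).comp continuous_fst)
        ((continuous_zpow _).comp continuous_snd)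

end AuxWP
noncomputable section AuxWP2

lemma gcd_univ_succ (m : ℕ) (c : Fin (m + 1) → ℕ) :
    Finset.univ.gcd c = Nat.gcd (c 0) (Finset.univ.gcd (c ∘ Fin.succ)) := by
  apply Nat.dvd_antisymm
  · exact Nat.dvd_gcd (Finset.gcd_dvd (Finset.mem_univ _))
      (Finset.dvd_gcd fun j _ => Finset.gcd_dvd (Finset.mem_univ _))
  · apply Finset.dvd_gcd
    intro k _
    refine Fin.cases ?_ (fun j => ?_) k
    · exact Nat.gcd_dvd_left _ _
    · exact (Nat.gcd_dvd_right _ _).trans (Finset.gcd_dvd (Finset.mem_univ j))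

private lemma twist_comb (t x y : ℂˣ) (p r : ℕ) (e f : ℤ) :
    (t ^ p * x) ^ e * (t ^ r * y) ^ f = t ^ ((p:ℤ) * e + (r:ℤ) * f) * (x ^ e * y ^ f) := by
  rw [mul_zpow, mul_zpow, mul_mul_mul_comm, ← zpow_natCast t p, ← zpow_natCast t r,
    ← zpow_mul, ← zpow_mul, ← zpow_add]

lemma bezoutMove (a b : ℕ) :
    ∃ B : (ℂˣ × ℂˣ) ≃ₜ ℂˣ × ℂˣ, ∀ (t x y : ℂˣ),
      B (t ^ a * x, t ^ b * y) = (t ^ Nat.gcd a b * (B (x, y)).1, (B (x, y)).2) := by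
  rcases Nat.eq_zero_or_pos (Nat.gcd a b) with h | h
  · have ha : a = 0 := Nat.eq_zero_of_gcd_eq_zero_left h
    have hb : b = 0 := Nat.eq_zero_of_gcd_eq_zero_right h
    exact ⟨Homeomorph.refl _, fun t x y => by simp [ha, hb, h]⟩
  · obtain ⟨a', ha'⟩ := Nat.gcd_dvd_left a b
    obtain ⟨b', hb'⟩ := Nat.gcd_dvd_right a b
    set g := Nat.gcd a b with hg
    set A := Nat.gcdA a b with hA
    set Bz := Nat.gcdB a b with hBz
    have hbez : (g : ℤ) = a * A + b * Bz := Nat.gcd_eq_gcd_ab a b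
    have hgz : (g : ℤ) ≠ 0 := by exact_mod_cast h.ne'
    have hkey : A * (a' : ℤ) + Bz * (b' : ℤ) = 1 := by
      have haz : (a : ℤ) = (g : ℤ) * a' := by exact_mod_cast ha'
      have hbz2 : (b : ℤ) = (g : ℤ) * b' := by exact_mod_cast hb'
      rw [haz, hbz2] at hbez
      have h2 : (g : ℤ) * (A * a' + Bz * b') = (g : ℤ) * 1 := by linear_combination -hbez
      exact mul_left_cancel₀ hgz h2
    have hdet : A * (a' : ℤ) - Bz * (-(b' : ℤ)) = 1 := by linear_combination hkey
    refine ⟨monomialHomeo A Bz (-(b' : ℤ)) (a' : ℤ) hdet, fun t x y => ?_⟩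
    show ((t ^ a * x) ^ A * (t ^ b * y) ^ Bz, (t ^ a * x) ^ (-(b':ℤ)) * (t ^ b * y) ^ (a':ℤ))
      = (t ^ g * (x ^ A * y ^ Bz), x ^ (-(b':ℤ)) * y ^ (a':ℤ))
    rw [twist_comb, twist_comb]
    have e1 : (a : ℤ) * A + (b : ℤ) * Bz = (g : ℤ) := hbez.symm
    have e2 : (a : ℤ) * (-(b' : ℤ)) + (b : ℤ) * (a' : ℤ) = 0 := by
      have haz : (a : ℤ) = (g : ℤ) * a' := by exact_mod_cast ha'
      have hbz2 : (b : ℤ) = (g : ℤ) * b' := by exact_mod_cast hb'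
      rw [haz, hbz2]; ring
    rw [e1, e2, zpow_zero, one_mul, zpow_natCast]

end AuxWP2
noncomputable section AuxWP3

lemma torusDiag (m : ℕ) : ∀ (c₀ : ℕ) (c : Fin m → ℕ),
    ∃ Ψ : (ℂˣ × (Fin m → ℂˣ)) ≃ₜ ℂˣ × (Fin m → ℂˣ),
      ∀ (t u₀ : ℂˣ) (u : Fin m → ℂˣ),
        Ψ (t ^ c₀ * u₀, fun k => t ^ c k * u k) =
          (t ^ Nat.gcd c₀ (Finset.univ.gcd c) * (Ψ (u₀, u)).1, (Ψ (u₀, u)).2) := by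
  induction m with
  | zero =>
    intro c₀ c
    refine ⟨Homeomorph.refl _, fun t u₀ u => ?_⟩
    have h : (Finset.univ : Finset (Fin 0)).gcd c = 0 := by simp
    simp only [Homeomorph.refl_apply, id_eq, h, Nat.gcd_zero_right, Prod.mk.injEq]
    exact ⟨trivial, funext fun k => k.elim0⟩
  | succ m ih =>
    intro c₀ c
    obtain ⟨B, hB⟩ := bezoutMove c₀ (c 0)
    obtain ⟨Ψ', hΨ'⟩ := ih (Nat.gcd c₀ (c 0)) (c ∘ Fin.succ)
    set Ψ : (ℂˣ × (Fin (m+1) → ℂˣ)) ≃ₜ ℂˣ × (Fin (m+1) → ℂˣ) :=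
      ((Homeomorph.refl ℂˣ).prodCongr (finConsHomeo m ℂˣ)).trans
      ((Homeomorph.prodAssoc ℂˣ ℂˣ (Fin m → ℂˣ)).symm.trans
      ((B.prodCongr (Homeomorph.refl (Fin m → ℂˣ))).trans
      ((Homeomorph.prodAssoc ℂˣ ℂˣ (Fin m → ℂˣ)).trans
      (((Homeomorph.refl ℂˣ).prodCongr (Homeomorph.prodComm ℂˣ (Fin m → ℂˣ))).trans
      ((Homeomorph.prodAssoc ℂˣ (Fin m → ℂˣ) ℂˣ).symm.trans
      ((Ψ'.prodCongr (Homeomorph.refl ℂˣ)).trans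
      ((Homeomorph.prodAssoc ℂˣ (Fin m → ℂˣ) ℂˣ).trans
      ((Homeomorph.refl ℂˣ).prodCongr (finSnocHomeo m ℂˣ).symm)))))))) with hΨdef
    refine ⟨Ψ, fun t u₀ u => ?_⟩
    have unf : ∀ (y₀ : ℂˣ) (y : Fin (m+1) → ℂˣ),
        Ψ (y₀, y) = ((Ψ' ((B (y₀, y 0)).1, y ∘ Fin.succ)).1,
          Fin.snoc (Ψ' ((B (y₀, y 0)).1, y ∘ Fin.succ)).2 (B (y₀, y 0)).2) :=
      fun _ _ => rfl
    rw [unf, unf]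
    have hT0 : (fun k => t ^ c k * u k) 0 = t ^ c 0 * u 0 := rfl
    have hcomp : ((fun k => t ^ c k * u k) ∘ Fin.succ) =
        fun k => t ^ (c ∘ Fin.succ) k * (u ∘ Fin.succ) k := rfl
    rw [hB t u₀ (u 0), hcomp, hΨ' t ((B (u₀, u 0)).1) (u ∘ Fin.succ)]
    have hg : Nat.gcd (Nat.gcd c₀ (c 0)) (Finset.univ.gcd (c ∘ Fin.succ)) =
        Nat.gcd c₀ (Finset.univ.gcd c) := by
      rw [gcd_univ_succ m c, Nat.gcd_assoc]
    rw [hg]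

end AuxWP3
noncomputable section AuxWP4

lemma isOpenMap_cpow (q : ℕ) (hq : 0 < q) : IsOpenMap (fun z : ℂ => z ^ q) := by
  have ha : AnalyticOnNhd ℂ (fun z : ℂ => z ^ q) Set.univ :=
    fun z _ => (analyticAt_id (𝕜 := ℂ)).pow q
  rcases ha.is_constant_or_isOpen isPreconnected_univ with ⟨w, hw⟩ | h
  · exfalso
    have h0 : (0 : ℂ) ^ q = w := hw 0 trivial
    have h1 : (1 : ℂ) ^ q = w := hw 1 trivial
    rw [zero_pow hq.ne', one_pow] at *
    exact one_ne_zero (h1.trans h0.symm)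
  · exact fun O hO => h O (Set.subset_univ O) hO

lemma isOpenMap_upow (q : ℕ) (hq : 0 < q) : IsOpenMap (fun s : ℂˣ => s ^ q) := by
  intro O hO
  have h2 : IsOpen ((fun z : ℂ => z ^ q) '' (Units.val '' O)) :=
    isOpenMap_cpow q hq _ (Units.isOpenEmbedding_val.isOpenMap _ hO)
  have him : Units.val '' ((fun s : ℂˣ => s ^ q) '' O) =
      (fun z : ℂ => z ^ q) '' (Units.val '' O) := by
    rw [Set.image_image, Set.image_image]
    simp [Units.val_pow_eq_pow_val]
  have h3 : (fun s : ℂˣ => s ^ q) '' O =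
      Units.val ⁻¹' ((fun z : ℂ => z ^ q) '' (Units.val '' O)) := by
    rw [← him, Set.preimage_image_eq _ Units.val_injective]
  rw [h3]
  exact h2.preimage Units.continuous_val

lemma surjective_upow (q : ℕ) (hq : 0 < q) : Function.Surjective (fun s : ℂˣ => s ^ q) := by
  intro u
  obtain ⟨z, hz⟩ : ∃ z : ℂ, z ^ q = (u : ℂ) := by
    refine ⟨Complex.exp (Complex.log (u : ℂ) / q), ?_⟩
    rw [← Complex.exp_nat_mul]
    have : (q : ℂ) ≠ 0 := Nat.cast_ne_zero.mpr hq.ne'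
    rw [mul_div_cancel₀ _ this, Complex.exp_log u.ne_zero]
  have hz0 : z ≠ 0 := by
    intro h0; rw [h0, zero_pow hq.ne'] at hz; exact u.ne_zero hz.symm
  exact ⟨Units.mk0 z hz0, Units.ext (by simpa using hz)⟩

/-- If a setoid is induced by a family of homeomorphism-like maps, its quotient map is open. -/
lemma isOpenMap_quotient_mk_of {Z γ : Type*} [TopologicalSpace Z] (s : Setoid Z)
    (P : γ → Prop) (T : γ → Z → Z)
    (hrel : ∀ z w, s.r z w ↔ ∃ g, P g ∧ T g z = w)
    (hcont : ∀ g, P g → Continuous (T g))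
    (hinv : ∀ g, P g → ∃ g', P g' ∧ ∀ z, T g' (T g z) = z) :
    IsOpenMap (Quotient.mk s) := by
  intro O hO
  have key : Quotient.mk s ⁻¹' (Quotient.mk s '' O) =
      ⋃ (g : γ) (_ : P g), (T g) ⁻¹' O := by
    ext w
    simp only [Set.mem_preimage, Set.mem_image, Set.mem_iUnion]
    constructor
    · rintro ⟨z, hz, hzw⟩
      have hr : s.r z w := Quotient.exact hzw
      obtain ⟨g, hg, hgz⟩ := (hrel z w).mp hr
      obtain ⟨g', hg', hgg'⟩ := hinv g hg
      exact ⟨g', hg', by show T g' w ∈ O; rw [← hgz, hgg']; exact hz⟩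
    · rintro ⟨g, hg, hw⟩
      refine ⟨T g w, hw, Quotient.sound ?_⟩
      obtain ⟨g', hg', hgg'⟩ := hinv g hg
      exact (hrel _ _).mpr ⟨g', hg', hgg' w⟩
  have : IsOpen (Quotient.mk s ⁻¹' (Quotient.mk s '' O)) := by
    rw [key]
    exact isOpen_iUnion fun g => isOpen_iUnion fun hg => (hcont g hg).isOpen_preimage O hO
  exact isOpen_coinduced.mpr this

/-- Two open quotient maps with the same fibers induce a homeomorphism. -/
lemma homeo_of_two_quotients {X S T : Type*} [TopologicalSpace X] [TopologicalSpace S]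
    [TopologicalSpace T] (p : X → S) (r : X → T)
    (hpc : Continuous p) (hps : Function.Surjective p) (hpo : IsOpenMap p)
    (hrc : Continuous r) (hrs : Function.Surjective r) (hro : IsOpenMap r)
    (hfib : ∀ a b, p a = p b ↔ r a = r b) : Nonempty (S ≃ₜ T) := by
  have hpq := hpo.isQuotientMap hpc hps
  have hrq := hro.isQuotientMap hrc hrs
  classical
  let f : S → T := fun x => r (hps x).choose
  let g : T → S := fun y => p (hrs y).choose
  have hf : ∀ a, f (p a) = r a := fun a => (hfib _ _).mp (hps (p a)).choose_spec
  have hg : ∀ a, g (r a) = p a := fun a => (hfib _ _).mpr (hrs (r a)).choose_spec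
  have hgf : ∀ x, g (f x) = x := by
    intro x; obtain ⟨a, rfl⟩ := hps x; rw [hf, hg]
  have hfg : ∀ y, f (g y) = y := by
    intro y; obtain ⟨a, rfl⟩ := hrs y; rw [hg, hf]
  have hfc : Continuous f := by
    rw [hpq.continuous_iff]
    exact (funext hf : f ∘ p = r) ▸ hrc
  have hgc : Continuous g := by
    rw [hrq.continuous_iff]
    exact (funext hg : g ∘ r = p) ▸ hpc
  exact ⟨⟨⟨f, g, hgf, hfg⟩, hfc, hgc⟩⟩

end AuxWP4

open Complex Topology
noncomputable section AuxWP5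

def piHomeoOfEquiv {ι κ : Type*} (e : ι ≃ κ) (Y : Type*) [TopologicalSpace Y] :
    (ι → Y) ≃ₜ (κ → Y) where
  toFun u k := u (e.symm k)
  invFun v j := v (e j)
  left_inv u := funext fun j => by simp
  right_inv v := funext fun k => by simp
  continuous_toFun := continuous_pi fun k => continuous_apply _
  continuous_invFun := continuous_pi fun j => continuous_apply _

variable {n : ℕ} (χ : Fin (n + 1) → ℕ) (I : Finset (Fin (n + 1)))

/-- The twisted multiplication `w ↦ s^{-χ}·w` on `ℂ^I`. -/
def Gm (s : ℂˣ) (w : ↥I → ℂ) : ↥I → ℂ := fun i => (((s ^ χ i.1)⁻¹ : ℂˣ) : ℂ) * w i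

def homeoGm : (ℂˣ × (↥I → ℂ)) ≃ₜ ℂˣ × (↥I → ℂ) where
  toFun y := (y.1, Gm χ I y.1 y.2)
  invFun y := (y.1, fun i => ((y.1 ^ χ i.1 : ℂˣ) : ℂ) * y.2 i)
  left_inv y := by
    refine Prod.ext rfl (funext fun i => ?_)
    show ((y.1 ^ χ i.1 : ℂˣ) : ℂ) * ((((y.1 ^ χ i.1)⁻¹ : ℂˣ) : ℂ) * y.2 i) = y.2 i
    rw [← mul_assoc, ← Units.val_mul, mul_inv_cancel, Units.val_one, one_mul]
  right_inv y := by
    refine Prod.ext rfl (funext fun i => ?_)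
    show (((y.1 ^ χ i.1)⁻¹ : ℂˣ) : ℂ) * (((y.1 ^ χ i.1 : ℂˣ) : ℂ) * y.2 i) = y.2 i
    rw [← mul_assoc, ← Units.val_mul, inv_mul_cancel, Units.val_one, one_mul]
  continuous_toFun := by
    refine continuous_fst.prodMk (continuous_pi fun i => Continuous.mul ?_ ?_)
    · exact Units.continuous_val.comp (((continuous_pow (χ i.1)).comp continuous_fst).inv)
    · exact (continuous_apply i).comp continuous_snd
  continuous_invFun := by
    refine continuous_fst.prodMk (continuous_pi fun i => Continuous.mul ?_ ?_)
    · exact Units.continuous_val.comp ((continuous_pow (χ i.1)).comp continuous_fst)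
    · exact (continuous_apply i).comp continuous_snd

lemma isOpenMap_mkMu (q : ℕ) : IsOpenMap (Quotient.mk (muSetoid q χ I)) := by
  refine isOpenMap_quotient_mk_of _ (fun ζ : ℂ => ζ ≠ 0 ∧ ζ ^ q = 1)
    (fun ζ w => fun i => ζ ^ χ i.1 * w i) (fun z w => ?_) (fun ζ hζ => ?_) (fun ζ hζ => ?_)
  · constructor
    · rintro ⟨ζ, h1, h2, h3⟩; exact ⟨ζ, ⟨h1, h2⟩, funext h3⟩
    · rintro ⟨ζ, ⟨h1, h2⟩, h3⟩; exact ⟨ζ, h1, h2, fun i => congrFun h3 i⟩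
  · exact continuous_pi fun i => continuous_const.mul (continuous_apply i)
  · refine ⟨ζ⁻¹, ⟨inv_ne_zero hζ.1, by rw [inv_pow, hζ.2, inv_one]⟩, fun w => funext fun i => ?_⟩
    show (ζ⁻¹) ^ χ i.1 * (ζ ^ χ i.1 * w i) = w i
    rw [← mul_assoc, ← mul_pow, inv_mul_cancel₀ hζ.1, one_pow, one_mul]

/-- `F(u₀, w) = [s^{-χ}·w]` for any `s` with `s^q = u₀`. -/
def Fmap (q : ℕ) (hq : 0 < q) (y : ℂˣ × (↥I → ℂ)) : Quotient (muSetoid q χ I) :=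
  Quotient.mk _ (Gm χ I (Classical.choose (surjective_upow q hq y.1)) y.2)

lemma Fmap_pow (q : ℕ) (hq : 0 < q) (s : ℂˣ) (w : ↥I → ℂ) :
    Fmap χ I q hq (s ^ q, w) = Quotient.mk _ (Gm χ I s w) := by
  have hs' : Classical.choose (surjective_upow q hq ((s ^ q, w) : ℂˣ × (↥I → ℂ)).1) ^ q = s ^ q :=
    Classical.choose_spec (surjective_upow q hq (s ^ q))
  set s' := Classical.choose (surjective_upow q hq ((s ^ q, w) : ℂˣ × (↥I → ℂ)).1) with hs'def
  show Quotient.mk _ (Gm χ I s' w) = Quotient.mk _ (Gm χ I s w)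
  have hζq : (s' * s⁻¹ : ℂˣ) ^ q = 1 := by
    rw [mul_pow, inv_pow, hs', mul_inv_cancel]
  refine Quotient.sound ⟨((s' * s⁻¹ : ℂˣ) : ℂ), Units.ne_zero _, ?_, fun i => ?_⟩
  · rw [← Units.val_pow_eq_pow_val, hζq, Units.val_one]
  · show ((s' * s⁻¹ : ℂˣ) : ℂ) ^ χ i.1 * ((((s' ^ χ i.1)⁻¹ : ℂˣ) : ℂ) * w i)
      = (((s ^ χ i.1)⁻¹ : ℂˣ) : ℂ) * w i
    rw [← mul_assoc, ← Units.val_pow_eq_pow_val, ← Units.val_mul]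
    congr 2
    rw [mul_pow, inv_pow, mul_right_comm, mul_inv_cancel, one_mul]
end AuxWP5

section AuxWP6
variable {n : ℕ} (χ : Fin (n + 1) → ℕ) (I : Finset (Fin (n + 1)))

private def sigq (q : ℕ) : ℂˣ × (↥I → ℂ) → ℂˣ × (↥I → ℂ) := fun y => (y.1 ^ q, y.2)

private lemma sigq_cont (q : ℕ) : Continuous (sigq I q) :=
  ((continuous_pow q).comp continuous_fst).prodMk continuous_snd

private lemma sigq_surj (q : ℕ) (hq : 0 < q) : Function.Surjective (sigq I q) := by
  rintro ⟨u, w⟩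
  obtain ⟨s, hs⟩ := surjective_upow q hq u
  exact ⟨(s, w), Prod.ext hs rfl⟩

private lemma sigq_open (q : ℕ) (hq : 0 < q) : IsOpenMap (sigq I q) :=
  (isOpenMap_upow q hq).prodMap IsOpenMap.id

lemma Fmap_sig (q : ℕ) (hq : 0 < q) (y : ℂˣ × (↥I → ℂ)) :
    Fmap χ I q hq (sigq I q y) = Quotient.mk _ (Gm χ I y.1 y.2) := Fmap_pow χ I q hq y.1 y.2

lemma continuous_Fmap (q : ℕ) (hq : 0 < q) : Continuous (Fmap χ I q hq) := by
  rw [((sigq_open I q hq).isQuotientMap (sigq_cont I q) (sigq_surj I q hq)).continuous_iff]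
  have : (Fmap χ I q hq) ∘ (sigq I q) = fun y => Quotient.mk _ (Gm χ I y.1 y.2) :=
    funext fun y => Fmap_sig χ I q hq y
  rw [this]
  exact Continuous.comp continuous_quot_mk (continuous_snd.comp (homeoGm χ I).continuous)

lemma isOpenMap_Fmap (q : ℕ) (hq : 0 < q) : IsOpenMap (Fmap χ I q hq) := by
  intro O hO
  have key : Fmap χ I q hq '' O =
      Quotient.mk _ '' (Prod.snd '' ((homeoGm χ I) '' ((sigq I q) ⁻¹' O))) := by
    ext t
    constructor
    · rintro ⟨y, hy, rfl⟩
      obtain ⟨x, rfl⟩ := sigq_surj I q hq y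
      exact ⟨Gm χ I x.1 x.2, ⟨(x.1, Gm χ I x.1 x.2), ⟨x, hy, rfl⟩, rfl⟩,
        (Fmap_sig χ I q hq x).symm⟩
    · rintro ⟨w, ⟨yy, ⟨x, hx, rfl⟩, rfl⟩, rfl⟩
      exact ⟨sigq I q x, hx, Fmap_sig χ I q hq x⟩
  rw [key]
  exact isOpenMap_mkMu χ I q _ (isOpenMap_snd _ ((homeoGm χ I).isOpenMap _
    (hO.preimage (sigq_cont I q))))

lemma Fmap_fiber (q : ℕ) (hq : 0 < q) (y y' : ℂˣ × (↥I → ℂ)) :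
    Fmap χ I q hq y = Fmap χ I q hq y' ↔
      ∃ t : ℂˣ, t ^ q * y.1 = y'.1 ∧ ∀ i : ↥I, (t : ℂ) ^ χ i.1 * y.2 i = y'.2 i := by
  obtain ⟨u, w⟩ := y
  obtain ⟨u', w'⟩ := y'
  obtain ⟨s, rfl⟩ := surjective_upow q hq u
  obtain ⟨s', rfl⟩ := surjective_upow q hq u'
  rw [Fmap_pow, Fmap_pow]
  constructor
  · intro h
    obtain ⟨ζ, hζ0, hζq, hrel⟩ := Quotient.exact h
    refine ⟨s' * Units.mk0 ζ hζ0 * s⁻¹, ?_, fun i => ?_⟩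
    · have hzq : (Units.mk0 ζ hζ0) ^ q = 1 := Units.ext (by simpa using hζq)
      show (s' * Units.mk0 ζ hζ0 * s⁻¹) ^ q * s ^ q = s' ^ q
      rw [mul_pow, mul_pow, hzq, mul_one, inv_pow, mul_assoc, inv_mul_cancel, mul_one]
    · have h1 := hrel i
      show (((s' * Units.mk0 ζ hζ0 * s⁻¹ : ℂˣ) : ℂ)) ^ χ i.1 * w i = w' i
      have hb : ((s' ^ χ i.1 : ℂˣ) : ℂ) ≠ 0 := Units.ne_zero _
      have ha : ((s ^ χ i.1 : ℂˣ) : ℂ) ≠ 0 := Units.ne_zero _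
      have hs0 : (s : ℂ) ≠ 0 := Units.ne_zero _
      have hs'0 : (s' : ℂ) ≠ 0 := Units.ne_zero _
      simp only [Gm, Units.val_mul, Units.val_inv_eq_inv_val, Units.val_mk0,
        Units.val_pow_eq_pow_val] at h1 ⊢
      field_simp at h1 ⊢
      have hinv : (s : ℂ)⁻¹ ^ χ i.1 * (s : ℂ) ^ χ i.1 = 1 := by
        rw [← mul_pow, inv_mul_cancel₀ hs0, one_pow]
      linear_combination (s : ℂ)⁻¹ ^ χ i.1 * h1 + w' i * hinv
  · rintro ⟨t, ht1, ht2⟩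
    refine Quotient.sound ⟨((s'⁻¹ * t * s : ℂˣ) : ℂ), Units.ne_zero _, ?_, fun i => ?_⟩
    · have : (s'⁻¹ * t * s : ℂˣ) ^ q = 1 := by
        rw [mul_pow, mul_pow, inv_pow, mul_assoc, ht1, inv_mul_cancel]
      rw [← Units.val_pow_eq_pow_val, this, Units.val_one]
    · have h2 := ht2 i
      show ((s'⁻¹ * t * s : ℂˣ) : ℂ) ^ χ i.1 * Gm χ I s w i = Gm χ I s' w' i
      have hb : ((s' ^ χ i.1 : ℂˣ) : ℂ) ≠ 0 := Units.ne_zero _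
      have ha : ((s ^ χ i.1 : ℂˣ) : ℂ) ≠ 0 := Units.ne_zero _
      have hs0 : (s : ℂ) ≠ 0 := Units.ne_zero _
      have hs'0 : (s' : ℂ) ≠ 0 := Units.ne_zero _
      simp only [Gm, Units.val_mul, Units.val_inv_eq_inv_val, Units.val_pow_eq_pow_val] at h2 ⊢
      field_simp at h2 ⊢
      have hinv : (s' : ℂ)⁻¹ ^ χ i.1 * (s' : ℂ) ^ χ i.1 = 1 := by
        rw [← mul_pow, inv_mul_cancel₀ hs'0, one_pow]
      linear_combination (s : ℂ) ^ χ i.1 * h2 + w i * (t : ℂ) ^ χ i.1 * (s : ℂ) ^ χ i.1 * hinv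

end AuxWP6

section AuxWP7
variable {n : ℕ} (χ : Fin (n + 1) → ℕ) (I : Finset (Fin (n + 1)))

lemma isOpenMap_mkCP : IsOpenMap (Quotient.mk (cpSetoid n χ)) := by
  have act : ∀ g : {g : ℂ // g ≠ 0}, ∀ z : CPts n, (fun i => g.1 ^ χ i * z.1 i) ≠ (0 : Fin (n+1) → ℂ) := by
    intro g z h0
    refine z.2 (funext fun i => ?_)
    have := congrFun h0 i
    simp only [Pi.zero_apply] at this ⊢
    exact (mul_eq_zero.mp this).resolve_left (pow_ne_zero _ g.2)
  refine isOpenMap_quotient_mk_of (cpSetoid n χ) (fun _ : {g : ℂ // g ≠ 0} => True)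
    (fun g z => ⟨fun i => g.1 ^ χ i * z.1 i, act g z⟩) (fun z w => ?_) (fun g _ => ?_)
    (fun g _ => ?_)
  · constructor
    · rintro ⟨g, h1, h2⟩
      exact ⟨⟨g, h1⟩, trivial, Subtype.ext (funext h2)⟩
    · rintro ⟨g, -, h2⟩
      exact ⟨g.1, g.2, fun i => congrFun (congrArg Subtype.val h2) i⟩
  · refine Continuous.subtype_mk ?_ _
    refine continuous_pi fun i => continuous_const.mul ((continuous_apply i).comp ?_)
    exact (continuous_subtype_val : Continuous (Subtype.val : CPts n → (Fin (n+1) → ℂ)))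
  · refine ⟨⟨g.1⁻¹, inv_ne_zero g.2⟩, trivial, fun z => Subtype.ext (funext fun i => ?_)⟩
    show (g.1⁻¹) ^ χ i * (g.1 ^ χ i * z.1 i) = z.1 i
    rw [← mul_assoc, ← mul_pow, inv_mul_cancel₀ g.2, one_pow, one_mul]

/-- Assembly of a torus point and a `ℂ^I` point into a point of `ℂ^{n+1} ∖ 0`. -/
def iotaF (x : (↥(Iᶜ) → ℂˣ) × (↥I → ℂ)) : Fin (n + 1) → ℂ := fun i =>
  if h : i ∈ I then x.2 ⟨i, h⟩ else ((x.1 ⟨i, Finset.mem_compl.mpr h⟩ : ℂˣ) : ℂ)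

lemma iotaF_ne (hne : (Iᶜ : Finset (Fin (n+1))).Nonempty) (x : (↥(Iᶜ) → ℂˣ) × (↥I → ℂ)) :
    iotaF I x ≠ 0 := by
  obtain ⟨j, hj⟩ := hne
  intro h0
  have hj' : j ∉ I := Finset.mem_compl.mp hj
  have := congrFun h0 j
  rw [iotaF, dif_neg hj'] at this
  exact (x.1 ⟨j, hj⟩).ne_zero (by simpa using this)

def iotaX (hne : (Iᶜ : Finset (Fin (n+1))).Nonempty) (x : (↥(Iᶜ) → ℂˣ) × (↥I → ℂ)) : CPts n :=
  ⟨iotaF I x, iotaF_ne I hne x⟩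

lemma continuous_iotaX (hne : (Iᶜ : Finset (Fin (n+1))).Nonempty) :
    Continuous (iotaX I hne) := by
  refine Continuous.subtype_mk (continuous_pi fun i => ?_) _
  by_cases h : i ∈ I
  · simp only [iotaF, dif_pos h]
    exact (continuous_apply _).comp continuous_snd
  · simp only [iotaF, dif_neg h]
    exact Units.continuous_val.comp ((continuous_apply _).comp continuous_fst)

def VsetCP : Set (CPts n) := {z | ∀ i ∉ I, z.1 i ≠ 0}

lemma isOpen_VsetCP : IsOpen (VsetCP I (n := n)) := by
  have : VsetCP I (n := n) = ⋂ (i : Fin (n+1)) (_ : i ∉ I), {z : CPts n | z.1 i ≠ 0} := by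
    ext z; simp [VsetCP]
  rw [this]
  refine isOpen_iInter_of_finite fun i => isOpen_iInter_of_finite fun hi => ?_
  exact isOpen_compl_singleton.preimage ((continuous_apply i).comp continuous_subtype_val)

noncomputable def homeoXV (hne : (Iᶜ : Finset (Fin (n+1))).Nonempty) :
    ((↥(Iᶜ) → ℂˣ) × (↥I → ℂ)) ≃ₜ ↥(VsetCP I (n := n)) where
  toFun x := ⟨iotaX I hne x, fun i hi => by
    simp only [iotaX, iotaF, dif_neg hi]
    exact Units.ne_zero _⟩
  invFun v := (fun j => Units.mk0 (v.1.1 j.1) (v.2 j.1 (Finset.mem_compl.mp j.2)),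
    fun i => v.1.1 i.1)
  left_inv x := by
    refine Prod.ext (funext fun j => Units.ext ?_) (funext fun i => ?_)
    · show iotaF I x j.1 = (x.1 j : ℂ)
      have hj : j.1 ∉ I := Finset.mem_compl.mp j.2
      rw [iotaF, dif_neg hj]
    · show iotaF I x i.1 = x.2 i
      rw [iotaF, dif_pos i.2]
  right_inv v := by
    refine Subtype.ext (Subtype.ext (funext fun i => ?_))
    show iotaF I _ i = v.1.1 i
    by_cases h : i ∈ I
    · rw [iotaF, dif_pos h]
    · rw [iotaF, dif_neg h]; rfl
  continuous_toFun := (continuous_iotaX I hne).subtype_mk _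
  continuous_invFun := by
    refine Continuous.prodMk (continuous_pi fun j => ?_) (continuous_pi fun i =>
      (continuous_apply i.1).comp (continuous_subtype_val.comp continuous_subtype_val))
    rw [Units.continuous_iff]
    constructor
    · exact (continuous_apply j.1).comp (continuous_subtype_val.comp continuous_subtype_val)
    · exact Continuous.inv₀
        ((continuous_apply j.1).comp (continuous_subtype_val.comp continuous_subtype_val))
        (fun v => v.2 j.1 (Finset.mem_compl.mp j.2))

lemma isOpenMap_iotaX (hne : (Iᶜ : Finset (Fin (n+1))).Nonempty) :
    IsOpenMap (iotaX I hne) := by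
  have : iotaX I hne = Subtype.val ∘ (homeoXV I hne) := rfl
  rw [this]
  exact ((isOpen_VsetCP I).isOpenMap_subtype_val).comp (homeoXV I hne).isOpenMap

lemma gcd_comp_equiv {m : ℕ} (e : ↥(Iᶜ) ≃ Fin m) :
    (Finset.univ.gcd fun k => χ (e.symm k).1) = Iᶜ.gcd χ := by
  apply Nat.dvd_antisymm
  · refine Finset.dvd_gcd fun j hj => ?_
    have : χ j = (fun k => χ (e.symm k).1) (e ⟨j, hj⟩) := by simp
    rw [this]
    exact Finset.gcd_dvd (Finset.mem_univ _)
  · exact Finset.dvd_gcd fun k _ => Finset.gcd_dvd (e.symm k).2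

end AuxWP7

section AuxWP8
variable {n : ℕ} (χ : Fin (n + 1) → ℕ) (I : Finset (Fin (n + 1)))

def prodShuffle (A B C : Type*) [TopologicalSpace A] [TopologicalSpace B] [TopologicalSpace C] :
    ((A × B) × C) ≃ₜ (B × (A × C)) where
  toFun y := (y.1.2, (y.1.1, y.2))
  invFun y := ((y.2.1, y.1), y.2.2)
  left_inv y := rfl
  right_inv y := rfl
  continuous_toFun := (continuous_snd.comp continuous_fst).prodMk
    ((continuous_fst.comp continuous_fst).prodMk continuous_snd)
  continuous_invFun := ((continuous_fst.comp continuous_snd).prodMk continuous_fst).prodMk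
    (continuous_snd.comp continuous_snd)

lemma Fmap_one (q : ℕ) (hq : 0 < q) (w : ↥I → ℂ) :
    Fmap χ I q hq (1, w) = Quotient.mk _ w := by
  have h := Fmap_pow χ I q hq 1 w
  rw [one_pow] at h
  rw [h]
  have : Gm χ I 1 w = w := funext fun i => by simp [Gm]
  rw [this]

end AuxWP8


/-- For a proper subset `I ⊊ {0,…,n}` with complement `J` and
`q = gcd{χᵢ : i ∈ J}`, the subset `U_I = {[z₀:…:zₙ] : zᵢ ≠ 0 for i ∉ I}` of `ℙ(χ)` is
homeomorphic to `(ℂ^×)^{|J|−1} × (ℂ^I / μ_q⟨χ_I⟩)`. -/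
theorem wproj_chart_homeomorph (n : ℕ) (χ : Fin (n + 1) → ℕ) (hχ : ∀ i, 0 < χ i)
    (I : Finset (Fin (n + 1))) (hI : I ≠ Finset.univ) :
    Nonempty
      ({x : CProj n χ // ∃ z : CPts n, Quotient.mk (cpSetoid n χ) z = x ∧
          ∀ i ∉ I, z.1 i ≠ 0} ≃ₜ
        ((Fin (Iᶜ.card - 1) → {g : ℂ // g ≠ 0}) ×
          Quotient (muSetoid (Iᶜ.gcd χ) χ I))) := by
  classical
  have hne : (Iᶜ : Finset (Fin (n + 1))).Nonempty := by
    have h : ∃ j, j ∉ I := by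
      by_contra h
      push_neg at h
      exact hI (Finset.eq_univ_iff_forall.mpr h)
    obtain ⟨j, hj⟩ := h
    exact ⟨j, Finset.mem_compl.mpr hj⟩
  set q := Iᶜ.gcd χ with hqdef
  have hq : 0 < q := by
    rcases Nat.eq_zero_or_pos q with h0 | h
    · obtain ⟨j, hj⟩ := hne
      exact absurd ((Finset.gcd_eq_zero_iff.mp h0) j hj) (hχ j).ne'
    · exact h
  set m' := Iᶜ.card - 1 with hm'def
  have hm : Iᶜ.card = m' + 1 := (Nat.succ_pred_eq_of_pos (Finset.card_pos.mpr hne)).symm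
  let e : ↥(Iᶜ) ≃ Fin (m' + 1) := Iᶜ.equivFin.trans (finCongr hm)
  let d : Fin (m' + 1) → ℕ := fun k => χ (e.symm k).1
  obtain ⟨Ψ, hΨ⟩ := torusDiag m' (d 0) (d ∘ Fin.succ)
  have hgcd : Nat.gcd (d 0) (Finset.univ.gcd (d ∘ Fin.succ)) = q := by
    rw [← gcd_univ_succ m' d]
    exact gcd_comp_equiv χ I e
  let W := (↥I → ℂ)
  let Θ : ((↥(Iᶜ) → ℂˣ) × W) ≃ₜ ((ℂˣ × (Fin m' → ℂˣ)) × W) :=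
    ((piHomeoOfEquiv e ℂˣ).prodCongr (Homeomorph.refl W)).trans
      (((finConsHomeo m' ℂˣ).prodCongr (Homeomorph.refl W)).trans
        (Ψ.prodCongr (Homeomorph.refl W)))
  let NZh : (Fin m' → ℂˣ) ≃ₜ (Fin m' → {g : ℂ // g ≠ 0}) :=
    Homeomorph.piCongrRight fun _ => unitsHomeoNZ
  let Fq := Fmap χ I q hq
  let r : ((↥(Iᶜ) → ℂˣ) × W) → ((Fin m' → {g : ℂ // g ≠ 0}) × Quotient (muSetoid q χ I)) :=
    (NZh.prodCongr (Homeomorph.refl (Quotient (muSetoid q χ I)))) ∘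
      (Prod.map id Fq) ∘ (prodShuffle ℂˣ (Fin m' → ℂˣ) W) ∘ Θ
  let pm : ((↥(Iᶜ) → ℂˣ) × W) → {x : CProj n χ // ∃ z : CPts n,
      Quotient.mk (cpSetoid n χ) z = x ∧ ∀ i ∉ I, z.1 i ≠ 0} :=
    fun x => ⟨Quotient.mk (cpSetoid n χ) (iotaX I hne x), iotaX I hne x, rfl,
      fun i hi => by simp only [iotaX, iotaF, dif_neg hi]; exact Units.ne_zero _⟩
  -- the weighted action on the chart
  let actX : ℂˣ → ((↥(Iᶜ) → ℂˣ) × W) → ((↥(Iᶜ) → ℂˣ) × W) := fun g x =>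
    (fun j => g ^ χ j.1 * x.1 j, fun i => (g : ℂ) ^ χ i.1 * x.2 i)
  -- equivariance of Θ
  have hΘeq : ∀ (g : ℂˣ) (x : (↥(Iᶜ) → ℂˣ) × W), Θ (actX g x) =
      ((g ^ q * (Θ x).1.1, (Θ x).1.2), fun i => (g : ℂ) ^ χ i.1 * (Θ x).2 i) := by
    intro g x
    have h1 : Θ (actX g x) = (Ψ (g ^ d 0 * x.1 (e.symm 0),
        fun j => g ^ (d ∘ Fin.succ) j * x.1 (e.symm (Fin.succ j))),
        fun i => (g : ℂ) ^ χ i.1 * x.2 i) := rfl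
    have h2 : Θ x = (Ψ (x.1 (e.symm 0), fun j => x.1 (e.symm (Fin.succ j))), x.2) := rfl
    rw [h1, hΨ g (x.1 (e.symm 0)) (fun j => x.1 (e.symm (Fin.succ j))), hgcd, h2]
  -- fibers of pm
  have hpfib : ∀ a b, pm a = pm b ↔ ∃ g : ℂˣ, actX g a = b := by
    intro a b
    rw [Subtype.ext_iff]
    show Quotient.mk (cpSetoid n χ) (iotaX I hne a) = Quotient.mk (cpSetoid n χ) (iotaX I hne b)
      ↔ _
    constructor
    · intro h
      obtain ⟨g, hg0, hgi⟩ := Quotient.exact h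
      refine ⟨Units.mk0 g hg0, Prod.ext (funext fun j => Units.ext ?_) (funext fun i => ?_)⟩
      · have hj := hgi j.1
        have hjI : j.1 ∉ I := Finset.mem_compl.mp j.2
        rw [show (iotaX I hne a).1 = iotaF I a from rfl,
          show (iotaX I hne b).1 = iotaF I b from rfl, iotaF, iotaF,
          dif_neg hjI, dif_neg hjI] at hj
        simpa [actX] using hj
      · have hi := hgi i.1
        rw [show (iotaX I hne a).1 = iotaF I a from rfl,
          show (iotaX I hne b).1 = iotaF I b from rfl, iotaF, iotaF,
          dif_pos i.2, dif_pos i.2] at hi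
        simpa [actX] using hi
    · rintro ⟨g, hgx⟩
      refine Quotient.sound ⟨(g : ℂ), g.ne_zero, fun i => ?_⟩
      show (g : ℂ) ^ χ i * iotaF I a i = iotaF I b i
      by_cases h : i ∈ I
      · have h2 := congrFun (congrArg Prod.snd hgx) ⟨i, h⟩
        rw [iotaF, iotaF, dif_pos h, dif_pos h]
        exact h2
      · have h1 := congrFun (congrArg Prod.fst hgx) ⟨i, Finset.mem_compl.mpr h⟩
        rw [iotaF, iotaF, dif_neg h, dif_neg h]
        have := congrArg Units.val h1
        simpa [actX] using this
  -- fibers of r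
  have hrfib : ∀ a b, r a = r b ↔ ∃ g : ℂˣ, actX g a = b := by
    intro a b
    have hmain : r a = r b ↔ ((Θ a).1.2 = (Θ b).1.2 ∧
        Fq ((Θ a).1.1, (Θ a).2) = Fq ((Θ b).1.1, (Θ b).2)) := by
      constructor
      · intro h
        have h' : (Prod.map id Fq) (prodShuffle ℂˣ (Fin m' → ℂˣ) W (Θ a)) =
            (Prod.map id Fq) (prodShuffle ℂˣ (Fin m' → ℂˣ) W (Θ b)) :=
          (NZh.prodCongr (Homeomorph.refl (Quotient (muSetoid q χ I)))).injective h
        exact ⟨congrArg Prod.fst h', congrArg Prod.snd h'⟩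
      · rintro ⟨h1, h2⟩
        show (NZh.prodCongr (Homeomorph.refl (Quotient (muSetoid q χ I))))
          ((Prod.map id Fq) (prodShuffle ℂˣ (Fin m' → ℂˣ) W (Θ a))) = _
        congr 1
        exact Prod.ext h1 h2
    rw [hmain, Fmap_fiber χ I q hq]
    constructor
    · rintro ⟨h12, t, ht1, ht2⟩
      refine ⟨t, Θ.injective ?_⟩
      rw [hΘeq]
      exact Prod.ext (Prod.ext ht1 h12) (funext ht2)
    · rintro ⟨t, rfl⟩
      refine ⟨?_, t, ?_, fun i => ?_⟩
      · rw [hΘeq]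
      · rw [hΘeq]
      · rw [hΘeq]
  -- pm is an open quotient map
  have hpc : Continuous pm :=
    Continuous.subtype_mk (continuous_quot_mk.comp (continuous_iotaX I hne)) _
  have hps : Function.Surjective pm := by
    rintro ⟨xq, z, hz, hzne⟩
    refine ⟨(fun j => Units.mk0 (z.1 j.1) (hzne j.1 (Finset.mem_compl.mp j.2)),
      fun i => z.1 i.1), ?_⟩
    have hiz : iotaX I hne (fun j => Units.mk0 (z.1 j.1) (hzne j.1 (Finset.mem_compl.mp j.2)),
        fun i => z.1 i.1) = z := by
      refine Subtype.ext (funext fun i => ?_)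
      show iotaF I _ i = z.1 i
      by_cases h : i ∈ I
      · rw [iotaF, dif_pos h]
      · rw [iotaF, dif_neg h]; rfl
    refine Subtype.ext ?_
    show Quotient.mk (cpSetoid n χ) (iotaX I hne _) = xq
    rw [hiz]
    exact hz
  have hpo : IsOpenMap pm := by
    intro O hO
    have key : pm '' O = Subtype.val ⁻¹'
        (Quotient.mk (cpSetoid n χ) '' (iotaX I hne '' O)) := by
      ext s
      constructor
      · rintro ⟨x, hx, rfl⟩
        exact ⟨iotaX I hne x, ⟨x, hx, rfl⟩, rfl⟩
      · rintro ⟨zz, ⟨x, hx, rfl⟩, hs⟩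
        exact ⟨x, hx, Subtype.ext hs⟩
    rw [key]
    exact ((isOpenMap_mkCP χ) _ ((isOpenMap_iotaX I hne) _ hO)).preimage continuous_subtype_val
  -- r is an open quotient map
  have hrc : Continuous r :=
    ((NZh.prodCongr (Homeomorph.refl _)).continuous).comp
      ((continuous_id.prodMap (continuous_Fmap χ I q hq)).comp
        (((prodShuffle ℂˣ (Fin m' → ℂˣ) W).continuous).comp Θ.continuous))
  have hro : IsOpenMap r :=
    ((NZh.prodCongr (Homeomorph.refl _)).isOpenMap).comp
      ((IsOpenMap.id.prodMap (isOpenMap_Fmap χ I q hq)).comp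
        (((prodShuffle ℂˣ (Fin m' → ℂˣ) W).isOpenMap).comp Θ.isOpenMap))
  have hrs : Function.Surjective r := by
    rintro ⟨v, ω⟩
    obtain ⟨w, hw⟩ := Quotient.exists_rep ω
    refine ⟨Θ.symm ((1, NZh.symm v), w), ?_⟩
    show (NZh.prodCongr (Homeomorph.refl (Quotient (muSetoid q χ I))))
      ((Prod.map id Fq) (prodShuffle ℂˣ (Fin m' → ℂˣ) W (Θ (Θ.symm ((1, NZh.symm v), w)))))
      = (v, ω)
    rw [Homeomorph.apply_symm_apply]
    show ((NZh (NZh.symm v), Fmap χ I q hq (1, w)) :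
      (Fin m' → {g : ℂ // g ≠ 0}) × Quotient (muSetoid q χ I)) = (v, ω)
    rw [Homeomorph.apply_symm_apply, Fmap_one χ I q hq w, hw]
  exact homeo_of_two_quotients pm r hpc hps hpo hrc hrs hro
    (fun a b => (hpfib a b).trans (hrfib a b).symm)
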